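/- For all vectors a, b ∈ ℝ^d with a_k > 0 for every k: ‖ a/‖a‖₁ − (a ∘ exp(b))/‖a ∘ exp(b)‖₁ ‖₁ ≤ 5 ‖b‖_∞, where ‖·‖₁ is the ℓ₁ norm, ‖·‖_∞ the ℓ∞ norm, and a ∘ exp(b) denotes the coordinatewise product (a_k e^{b_k})_{k=1,…,d}. -/

import Mathlib

open scoped BigOperators

/-- For all vectors `a b : ℝ^d` with `a k > 0` for every `k`,
`‖ a/‖a‖₁ − (a ∘ exp b)/‖a ∘ exp b‖₁ ‖₁ ≤ 5 ‖b‖_∞`.  Here the ℓ₁ norm is written out as a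
sum of absolute values and `‖b‖` is the sup (ℓ∞) norm on `Fin d → ℝ`. -/
theorem l1_ratio_exp_perturbation_bound (d : ℕ) (hd : 1 ≤ d) (a b : Fin d → ℝ)
    (ha : ∀ k, 0 < a k) :
    ∑ k, |a k / (∑ j, |a j|) - a k * Real.exp (b k) / (∑ j, |a j * Real.exp (b j)|)|
      ≤ 5 * ‖b‖ := by
  have hεnn : (0:ℝ) ≤ ‖b‖ := norm_nonneg b
  have hbk : ∀ k, |b k| ≤ ‖b‖ := fun k => by
    simpa [Real.norm_eq_abs] using norm_le_pi_norm b k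
  have hne : (Finset.univ : Finset (Fin d)).Nonempty := by
    have : 0 < d := hd
    exact ⟨⟨0, this⟩, Finset.mem_univ _⟩
  set S := ∑ j, a j with hSdef
  set T := ∑ j, a j * Real.exp (b j) with hTdef
  have hSpos : 0 < S := Finset.sum_pos (fun j _ => ha j) hne
  have hTpos : 0 < T := Finset.sum_pos (fun j _ => mul_pos (ha j) (Real.exp_pos _)) hne
  have hS1 : (∑ j, |a j|) = S := by
    simp [abs_of_pos (ha _), hSdef]
  have hT1 : (∑ j, |a j * Real.exp (b j)|) = T := by
    refine Finset.sum_congr rfl fun j _ => ?_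
    exact abs_of_pos (mul_pos (ha j) (Real.exp_pos _))
  rw [hS1, hT1]
  -- pointwise decomposition
  have eq1 : ∀ k, a k / S - a k * Real.exp (b k) / T
      = (a k / S) * (1 - Real.exp (b k)) + (a k * Real.exp (b k) / S) * (1 - S / T) := by
    intro k
    field_simp
    ring
  have hq : ∀ k, 0 < a k * Real.exp (b k) := fun k => mul_pos (ha k) (Real.exp_pos _)
  have step1 : ∑ k, |a k / S - a k * Real.exp (b k) / T|
      ≤ (∑ k, (a k / S) * |Real.exp (b k) - 1|) + (T / S) * |1 - S / T| := by
    have : ∀ k, |a k / S - a k * Real.exp (b k) / T|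
        ≤ (a k / S) * |Real.exp (b k) - 1| + (a k * Real.exp (b k) / S) * |1 - S / T| := by
      intro k
      rw [eq1 k]
      refine (abs_add_le _ _).trans ?_
      rw [abs_mul, abs_mul, abs_of_pos (div_pos (ha k) hSpos),
        abs_of_pos (div_pos (hq k) hSpos), abs_sub_comm]
    refine (Finset.sum_le_sum fun k _ => this k).trans ?_
    rw [Finset.sum_add_distrib]
    have : ∑ k, (a k * Real.exp (b k) / S) * |1 - S / T| = (T / S) * |1 - S / T| := by
      rw [← Finset.sum_mul, ← Finset.sum_div]
    rw [this]
  have step2 : (T / S) * |1 - S / T| ≤ ∑ k, (a k / S) * |Real.exp (b k) - 1| := by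
    have h0 : (T / S) * (1 - S / T) = (T - S) / S := by
      field_simp
    have h1 : (T / S) * |1 - S / T| = |T - S| / S := by
      rw [← abs_of_pos (div_pos hTpos hSpos), ← abs_mul, h0, abs_div, abs_of_pos hSpos]
    rw [h1]
    have h2 : T - S = ∑ k, a k * (Real.exp (b k) - 1) := by
      rw [hSdef, hTdef, ← Finset.sum_sub_distrib]
      exact Finset.sum_congr rfl fun k _ => by ring
    rw [h2]
    calc |∑ k, a k * (Real.exp (b k) - 1)| / S
        ≤ (∑ k, |a k * (Real.exp (b k) - 1)|) / S := by
          gcongr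
          exact Finset.abs_sum_le_sum_abs _ _
      _ = ∑ k, (a k / S) * |Real.exp (b k) - 1| := by
          rw [Finset.sum_div]
          refine Finset.sum_congr rfl fun k _ => ?_
          rw [abs_mul, abs_of_pos (ha k)]
          ring
  have key : ∑ k, |a k / S - a k * Real.exp (b k) / T|
      ≤ 2 * ∑ k, (a k / S) * |Real.exp (b k) - 1| := by
    linarith [step1, step2]
  have hsum1 : ∑ k, a k / S = 1 := by
    rw [← Finset.sum_div, ← hSdef, div_self hSpos.ne']
  by_cases hε1 : ‖b‖ ≤ 1
  · -- small case: |exp(b k) - 1| ≤ 2|b k| ≤ 2‖b‖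
    have hbd : ∀ k, |Real.exp (b k) - 1| ≤ 2 * ‖b‖ := by
      intro k
      have := Real.abs_exp_sub_one_le ((hbk k).trans hε1)
      exact this.trans (by nlinarith [hbk k])
    have : ∑ k, (a k / S) * |Real.exp (b k) - 1| ≤ 2 * ‖b‖ := by
      calc ∑ k, (a k / S) * |Real.exp (b k) - 1|
          ≤ ∑ k, (a k / S) * (2 * ‖b‖) := by
            refine Finset.sum_le_sum fun k _ => ?_
            exact mul_le_mul_of_nonneg_left (hbd k) (div_pos (ha k) hSpos).le
        _ = 2 * ‖b‖ := by rw [← Finset.sum_mul, hsum1, one_mul]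
    linarith
  · -- large case: sum ≤ 2 ≤ 5‖b‖
    push_neg at hε1
    have hsum2 : ∑ k, a k * Real.exp (b k) / T = 1 := by
      rw [← Finset.sum_div, ← hTdef, div_self hTpos.ne']
    have : ∑ k, |a k / S - a k * Real.exp (b k) / T| ≤ 2 := by
      calc ∑ k, |a k / S - a k * Real.exp (b k) / T|
          ≤ ∑ k, (a k / S + a k * Real.exp (b k) / T) := by
            refine Finset.sum_le_sum fun k _ => ?_
            refine (abs_sub _ _).trans ?_
            rw [abs_of_pos (div_pos (ha k) hSpos), abs_of_pos (div_pos (hq k) hTpos)]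
        _ = 2 := by rw [Finset.sum_add_distrib, hsum1, hsum2]; norm_num
    linarith
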